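/- Let T > 0, let F, G : [0,T) → [0,∞) be functions of class C¹, let φ : [0,T) → (0,∞) be continuous, and let a > 0, b ≥ 0, c ≥ 0 be real numbers. Assume that for all t ∈ [0,T): (F+G)'(t) ≤ −φ(t)·( F(t) + a·(G(t))² − b·G(t) − c·(G(t))^{3/2} ). Set σ₀ := (c + √(ab))/a. Then for all t ∈ [0,T): G(t) + F(t) ≤ σ₀²·(1 + b + c·σ₀) + F(0) + G(0) + 1. -/

import Mathlib

open Real

set_option maxHeartbeats 1000000 in
/-- Lemma 3.3: if `(F+G)' ≤ -φ (F + a G² - b G - c G^{3/2})` on `[0,T)` with `F, G ≥ 0`,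
`φ > 0`, `a > 0`, `b, c ≥ 0`, then setting `σ₀ := (c + √(ab))/a` one has
`G + F ≤ σ₀² (1 + b + c σ₀) + F(0) + G(0) + 1` on `[0,T)`. -/
theorem ode_FG_bound (T : ℝ) (hT : 0 < T) (F G F' G' φ : ℝ → ℝ) (a b c : ℝ)
    (ha : 0 < a) (hb : 0 ≤ b) (hc : 0 ≤ c)
    (hF_nn : ∀ t ∈ Set.Ico (0:ℝ) T, 0 ≤ F t)
    (hG_nn : ∀ t ∈ Set.Ico (0:ℝ) T, 0 ≤ G t)
    (hF_deriv : ∀ t ∈ Set.Ico (0:ℝ) T, HasDerivWithinAt F (F' t) (Set.Ico 0 T) t)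
    (hG_deriv : ∀ t ∈ Set.Ico (0:ℝ) T, HasDerivWithinAt G (G' t) (Set.Ico 0 T) t)
    (hF'_cont : ContinuousOn F' (Set.Ico 0 T))
    (hG'_cont : ContinuousOn G' (Set.Ico 0 T))
    (hφ_cont : ContinuousOn φ (Set.Ico 0 T))
    (hφ_pos : ∀ t ∈ Set.Ico (0:ℝ) T, 0 < φ t)
    (hineq : ∀ t ∈ Set.Ico (0:ℝ) T,
      F' t + G' t ≤ -φ t * (F t + a * (G t) ^ 2 - b * G t - c * (G t) ^ ((3:ℝ)/2))) :
    ∀ t ∈ Set.Ico (0:ℝ) T,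
      G t + F t ≤ ((c + Real.sqrt (a*b))/a) ^ 2 * (1 + b + c * ((c + Real.sqrt (a*b))/a))
        + F 0 + G 0 + 1 := by
  have hab : (0:ℝ) ≤ a * b := mul_nonneg ha.le hb
  set r := Real.sqrt (a*b) with hr_def
  have hr0 : 0 ≤ r := Real.sqrt_nonneg _
  have hr2 : r^2 = a*b := Real.sq_sqrt hab
  set σ := (c + r)/a with hσ_def
  have hσa : a * σ = c + r := by
    rw [hσ_def]; field_simp [ha.ne']
  have hσ0 : 0 ≤ σ := div_nonneg (by linarith) ha.le
  set K := σ^2*(1+b+c*σ) with hK_def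
  have hK0 : 0 ≤ K :=
    mul_nonneg (sq_nonneg σ) (by nlinarith [mul_nonneg hc hσ0])
  have h2 : a*σ^2 = c*σ + r*σ := by
    rw [show a*σ^2 = (a*σ)*σ by ring, hσa]; ring
  have h1 : a * (r * σ) = r * c + a * b := by
    rw [show a*(r*σ) = r*(a*σ) by ring, hσa, ← hr2]; ring
  have hrσ : b ≤ r * σ := by nlinarith [mul_nonneg hr0 hc]
  clear_value K σ r
  -- key pointwise estimate: where `F + G > K`, the derivative is nonpositive
  have key : ∀ u ∈ Set.Ico (0:ℝ) T, K < F u + G u → F' u + G' u ≤ 0 := by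
    intro u hu hKu
    have hφu := hφ_pos u hu
    have hFu := hF_nn u hu
    have hGu := hG_nn u hu
    have hX : 0 ≤ F u + a * (G u)^2 - b * G u - c * (G u)^((3:ℝ)/2) := by
      by_contra hX
      push_neg at hX
      set s := Real.sqrt (G u) with hs_def
      have hs0 : 0 ≤ s := Real.sqrt_nonneg _
      have hs2 : s^2 = G u := Real.sq_sqrt hGu
      have h32 : (G u)^((3:ℝ)/2) = s^3 := by
        rw [hs_def, show ((3:ℝ)/2) = (1/2)*((3:ℕ):ℝ) by norm_num,
          Real.rpow_mul hGu, Real.rpow_natCast, Real.sqrt_eq_rpow]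
      rw [h32, ← hs2] at hX
      rw [← hs2] at hKu
      clear_value s
      have hs_pos : 0 < s := by
        rcases hs0.lt_or_eq with h | h
        · exact h
        · exfalso; rw [← h] at hX; norm_num at hX; linarith
      have hslt : s < σ := by
        by_contra hcontra
        push_neg at hcontra
        have hP : 0 ≤ (s - σ) * (a*s + a*σ - c) := by
          apply mul_nonneg (by linarith)
          nlinarith [mul_nonneg ha.le hs0]
        have hge : c*s + b ≤ a*s^2 := by nlinarith [hP, h2, hrσ]
        have hmul := mul_le_mul_of_nonneg_left hge (sq_nonneg s)
        nlinarith [hX, hFu, hmul]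
      have hs2lt : s^2 < σ^2 := by nlinarith
      have hs3lt : s^3 < σ^3 := by nlinarith
      nlinarith [hKu, hX, mul_nonneg ha.le (pow_nonneg hs0 4),
        mul_le_mul_of_nonneg_left hs2lt.le hb, mul_le_mul_of_nonneg_left hs3lt.le hc]
    have h := hineq u hu
    nlinarith [mul_nonneg hφu.le hX]
  -- main argument
  intro t ht
  by_contra hcon
  push_neg at hcon
  have h0T : (0:ℝ) ∈ Set.Ico (0:ℝ) T := ⟨le_refl _, hT⟩
  have hF0 := hF_nn 0 h0T
  have hG0 := hG_nn 0 h0T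
  set K' := max K (F 0 + G 0) with hK'_def
  have hK'le : K' ≤ K + F 0 + G 0 := max_le (by linarith) (by linarith)
  have hsub : Set.Icc (0:ℝ) t ⊆ Set.Ico 0 T :=
    fun u hu => ⟨hu.1, lt_of_le_of_lt hu.2 ht.2⟩
  have hHcont : ContinuousOn (fun u => F u + G u) (Set.Icc 0 t) := by
    intro u hu
    exact (((hF_deriv u (hsub hu)).continuousWithinAt).add
      ((hG_deriv u (hsub hu)).continuousWithinAt)).mono hsub
  set S := {u ∈ Set.Icc (0:ℝ) t | F u + G u ≤ K'} with hS_def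
  have hS0 : (0:ℝ) ∈ S := ⟨⟨le_refl _, ht.1⟩, le_max_right _ _⟩
  have hSclosed : IsClosed S := by
    have h := hHcont.preimage_isClosed_of_isClosed isClosed_Icc
      (isClosed_Iic (a := K'))
    convert h using 1
    rfl
  have hSsub : S ⊆ Set.Icc 0 t := fun u hu => hu.1
  have hScompact : IsCompact S :=
    isCompact_Icc.of_isClosed_subset hSclosed hSsub
  have hs0_mem : sSup S ∈ S := hScompact.sSup_mem ⟨0, hS0⟩
  set s0 := sSup S with hs0_def
  have hs0_Icc : s0 ∈ Set.Icc 0 t := hs0_mem.1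
  have hs0K : F s0 + G s0 ≤ K' := hs0_mem.2
  have ht_notS : t ∉ S := by
    intro h
    have := h.2
    linarith [hcon]
  have hs0_lt_t : s0 < t :=
    lt_of_le_of_ne hs0_Icc.2 (fun h => ht_notS (h ▸ hs0_mem))
  have hbdd : BddAbove S := ⟨t, fun u hu => hu.1.2⟩
  have hgtK : ∀ u ∈ Set.Ioo s0 t, K < F u + G u := by
    intro u hu
    by_contra hle
    push_neg at hle
    have huS : u ∈ S := ⟨⟨le_trans hs0_Icc.1 hu.1.le, hu.2.le⟩,
      le_trans hle (le_max_left _ _)⟩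
    exact absurd (le_csSup hbdd huS) (not_le.2 hu.1)
  have hderiv : ∀ u ∈ Set.Ioo s0 t,
      HasDerivAt (fun x => F x + G x) (F' u + G' u) u := by
    intro u hu
    have huI : u ∈ Set.Ico (0:ℝ) T :=
      ⟨le_trans hs0_Icc.1 hu.1.le, lt_trans hu.2 ht.2⟩
    have hnhds : Set.Ico (0:ℝ) T ∈ nhds u := by
      refine mem_nhds_iff.2 ⟨Set.Ioo 0 T, Set.Ioo_subset_Ico_self, isOpen_Ioo, ?_⟩
      exact ⟨lt_of_le_of_lt hs0_Icc.1 hu.1, lt_trans hu.2 ht.2⟩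
    exact ((hF_deriv u huI).hasDerivAt hnhds).add ((hG_deriv u huI).hasDerivAt hnhds)
  have hanti : AntitoneOn (fun x => F x + G x) (Set.Icc s0 t) := by
    apply antitoneOn_of_deriv_nonpos (convex_Icc s0 t)
    · exact hHcont.mono (Set.Icc_subset_Icc hs0_Icc.1 le_rfl)
    · intro u hu
      rw [interior_Icc] at hu
      exact (hderiv u hu).differentiableAt.differentiableWithinAt
    · intro u hu
      rw [interior_Icc] at hu
      rw [(hderiv u hu).deriv]
      refine key u ?_ (hgtK u hu)
      exact ⟨le_trans hs0_Icc.1 hu.1.le, lt_trans hu.2 ht.2⟩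
  have hmono := hanti (Set.left_mem_Icc.2 hs0_lt_t.le)
    (Set.right_mem_Icc.2 hs0_lt_t.le) hs0_lt_t.le
  simp only at hmono
  linarith
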